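/- For every natural number m ≥ 1 there exist positive integers n_1 < n_2 < … < n_m such that z(n_i) = 1 for each i, z(n) = 0 for every other n in the interval [n_1, n_m], and n_{i+1} − n_i > m for each i < m. In particular, for every m there is an interval of m consecutive positive integers on which z is identically 0, and hence the upper Banach density of {n ∈ ℕ₊ : z(n) = 0}, i.e. lim_{L→∞} sup_{t ≥ 0} |{n ∈ (t, t+L] : z(n) = 0}| / L, equals 1. -/

import Mathlib

open Classical Filter Topology
set_option linter.unusedSectionVars false
set_option maxHeartbeats 1000000

namespace SparseAux

def One (b : ℕ → ℕ) (n : ℕ) : Prop := ∃ k, 1 ≤ k ∧ b k = n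

section
variable {p b : ℕ → ℕ}

lemma pmono (hpmono : ∀ k : ℕ, 1 ≤ k → p k < p (k + 1)) :
    ∀ j J, 1 ≤ j → j ≤ J → p j ≤ p J := by
  intro j J h1 hJ
  induction J, hJ using Nat.le_induction with
  | base => exact le_refl _
  | succ J hJ IH => exact IH.trans (hpmono J (h1.trans hJ)).le

lemma ppos (hp1 : 3 ≤ p 1) (hpmono : ∀ k : ℕ, 1 ≤ k → p k < p (k + 1)) :
    ∀ j, 1 ≤ j → 3 ≤ p j := fun j hj => hp1.trans (pmono hpmono 1 j le_rfl hj)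

lemma pdvd' (hpdvd : ∀ k : ℕ, 1 ≤ k → p k ∣ p (k + 1)) :
    ∀ j J, 1 ≤ j → j ≤ J → p j ∣ p J := by
  intro j J h1 hJ
  induction J, hJ using Nat.le_induction with
  | base => exact dvd_rfl
  | succ J hJ IH => exact IH.trans (hpdvd J (h1.trans hJ))

lemma pdouble (hpmono : ∀ k : ℕ, 1 ≤ k → p k < p (k + 1))
    (hpdvd : ∀ k : ℕ, 1 ≤ k → p k ∣ p (k + 1)) :
    ∀ J, 1 ≤ J → 2 * p J ≤ p (J + 1) := by
  intro J hJ
  obtain ⟨c, hc⟩ := hpdvd J hJ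
  have hlt := hpmono J hJ
  rcases Nat.lt_or_ge c 2 with h | h
  · interval_cases c <;> omega
  · calc 2 * p J ≤ c * p J := Nat.mul_le_mul_right _ h
    _ = p (J + 1) := by rw [hc]; ring

lemma pgrow (hp1 : 3 ≤ p 1) (hpmono : ∀ k : ℕ, 1 ≤ k → p k < p (k + 1))
    (hpdvd : ∀ k : ℕ, 1 ≤ k → p k ∣ p (k + 1)) :
    ∀ J, 1 ≤ J → 3 * 2 ^ (J - 1) ≤ p J := by
  intro J hJ
  induction J, hJ using Nat.le_induction with
  | base => simpa using hp1
  | succ J hJ IH =>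
      have h2 := pdouble hpmono hpdvd J hJ
      have : 3 * 2 ^ (J + 1 - 1) = 2 * (3 * 2 ^ (J - 1)) := by
        obtain ⟨J', rfl⟩ := Nat.exists_eq_add_of_le hJ
        simp [Nat.add_sub_cancel_left, pow_succ, Nat.add_comm 1 J']
        ring
      omega



-- abbreviation for the avoid-set
def S (p b : ℕ → ℕ) (k : ℕ) : Set ℕ :=
  {n : ℕ | 1 ≤ n ∧ ∀ j : ℕ, 1 ≤ j → j ≤ k → ¬∃ m : ℕ, n = b j + m * p j}

variable (hb1 : b 1 = 1)
  (hbrec : ∀ k : ℕ, 1 ≤ k → IsLeast (S p b k) (b (k + 1)))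

include hb1 hbrec

lemma bpos : ∀ k, 1 ≤ k → 1 ≤ b k := by
  intro k hk
  match k, hk with
  | 1, _ => rw [hb1]
  | (j+2), _ => exact (hbrec (j+1) (by omega)).1.1

lemma bmono_succ : ∀ k, 1 ≤ k → b k < b (k + 1) := by
  intro k hk
  have hmem := (hbrec k hk).1
  have hne : b (k+1) ≠ b k := by
    intro h
    exact hmem.2 k hk le_rfl ⟨0, by omega⟩
  have hge : b k ≤ b (k+1) := by
    match k, hk, hmem, hne with
    | 1, _, hmem, hne => rw [hb1]; exact hmem.1
    | (j+2), _, hmem, hne =>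
        refine (hbrec (j+1) (by omega)).2 ?_
        exact ⟨hmem.1, fun i hi1 hi2 => hmem.2 i hi1 (by omega)⟩
  omega

lemma bmono' : ∀ k l, 1 ≤ k → k < l → b k < b l := by
  intro k l h1 hkl
  induction l, hkl using Nat.le_induction with
  | base => exact bmono_succ hb1 hbrec k h1
  | succ l hl IH => exact IH.trans (bmono_succ hb1 hbrec l (by omega))

lemma bmono_le : ∀ k l, 1 ≤ k → k ≤ l → b k ≤ b l := by
  intro k l h1 hkl
  rcases eq_or_lt_of_le hkl with rfl | h
  · exact le_rfl
  · exact (bmono' hb1 hbrec k l h1 h).le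

lemma bge : ∀ k, 1 ≤ k → k ≤ b k := by
  intro k hk
  induction k, hk using Nat.le_induction with
  | base => omega
  | succ k hk IH => have := bmono_succ hb1 hbrec k hk; omega

lemma bavoid : ∀ k j, 1 ≤ j → j < k → ∀ m, b k ≠ b j + m * p j := by
  intro k j hj hjk m heq
  match k, hjk with
  | (k'+1), hjk =>
    exact (hbrec k' (by omega)).1.2 j hj (by omega) ⟨m, heq⟩


variable (hp1 : 3 ≤ p 1)
  (hpmono : ∀ k : ℕ, 1 ≤ k → p k < p (k + 1))
  (hpdvd : ∀ k : ℕ, 1 ≤ k → p k ∣ p (k + 1))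

include hp1 hpmono hpdvd

lemma blt_p : ∀ j, 1 ≤ j → b j < p j := by
  intro j
  induction j using Nat.strong_induction_on with
  | _ j IH =>
    intro hj
    match j, hj with
    | 1, _ =>
        rw [hb1]; exact lt_of_lt_of_le (by norm_num) hp1
    | (j'+2), _ =>
        have hj' : 1 ≤ j' + 1 := by omega
        have hle : b (j'+2) ≤ p (j'+1) := by
          refine (hbrec (j'+1) hj').2 ⟨?_, ?_⟩
          · have := ppos hp1 hpmono (j'+1) hj'; omega
          · intro i hi1 hi2 ⟨m, hm⟩
            have hdvd : p i ∣ p (j'+1) := pdvd' hpdvd i (j'+1) hi1 hi2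
            have hdvd2 : p i ∣ b i := by
              have : b i = p (j'+1) - m * p i := by omega
              rw [this]
              exact Nat.dvd_sub hdvd (Dvd.intro_left m rfl)
            have hbi : 1 ≤ b i := bpos hb1 hbrec i hi1
            have := Nat.le_of_dvd (by omega) hdvd2
            have := IH i (by omega) hi1
            omega
        exact lt_of_le_of_lt hle (hpmono (j'+1) hj')

lemma cover : ∀ n, 1 ≤ n → ∃ j m, 1 ≤ j ∧ j ≤ n ∧ n = b j + m * p j := by
  intro n hn
  by_contra hno
  push_neg at hno
  have hmem : n ∈ S p b n := by
    refine ⟨hn, fun j hj1 hj2 ⟨m, hm⟩ => ?_⟩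
    exact absurd hm (hno j m hj1 hj2)
  have h1 := (hbrec n hn).2 hmem
  have h2 := bge hb1 hbrec (n+1) (by omega)
  omega

lemma not_one_shift : ∀ j m, 1 ≤ j → 1 ≤ m → ¬ One b (b j + m * p j) := by
  rintro j m hj hm ⟨k, hk, he⟩
  rcases le_or_gt k j with h | h
  · have h1 : b k ≤ b j := bmono_le hb1 hbrec k j hk h
    have h2 : 3 ≤ p j := ppos hp1 hpmono j hj
    have : 1 * p j ≤ m * p j := Nat.mul_le_mul_right _ hm
    omega
  · exact bavoid hb1 hbrec k j hj h m he

lemma one_iff : ∀ n, 1 ≤ n →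
    (One b n ↔ ∀ j m, 1 ≤ j → 1 ≤ m → n ≠ b j + m * p j) := by
  intro n hn
  constructor
  · rintro h j m hj hm rfl
    exact not_one_shift hb1 hbrec hp1 hpmono hpdvd j m hj hm h
  · intro h
    obtain ⟨j, m, hj1, hj2, hm⟩ := cover hb1 hbrec hp1 hpmono hpdvd n hn
    rcases Nat.eq_zero_or_pos m with rfl | hm1
    · exact ⟨j, hj1, by omega⟩
    · exact absurd hm (h j m hj1 hm1)


omit hp1 hpmono hpdvd hb1 hbrec in
lemma geo_sum : ∀ (i Y : ℕ), (∑ t ∈ Finset.range i, Y / 2 ^ t) ≤ 2 * Y := by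
  intro i
  induction i with
  | zero => intro Y; simp
  | succ i IH =>
    intro Y
    rw [Finset.sum_range_succ']
    have h1 : ∀ t, Y / 2 ^ (t + 1) = (Y / 2) / 2 ^ t := by
      intro t
      rw [Nat.div_div_eq_div_mul, pow_succ']
    simp only [h1, pow_zero, Nat.div_one]
    have h2 := IH (Y / 2)
    have h3 : 2 * (Y / 2) ≤ Y := Nat.mul_div_le Y 2 |>.trans_eq (by ring_nf) |>.trans le_rfl
    omega

lemma b_le : ∀ i, 1 ≤ i → b i ≤ 3 * i := by
  intro i hi
  match i, hi with
  | 1, _ => rw [hb1]; omega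
  | (i'+1), _ =>
    rcases Nat.eq_zero_or_pos i' with rfl | hi'
    · rw [show (0:ℕ)+1 = 1 from rfl, hb1]; omega
    set X := 3 * i' + 3 with hX
    -- find an avoider ≤ X
    by_contra hno
    push_neg at hno
    have hbig : X < b (i'+1) := by omega
    -- every n in [1,X] is covered by some progression j ≤ i'
    have hcov : ∀ n, 1 ≤ n → n ≤ X → ∃ j ∈ Finset.Icc 1 i', ∃ m, n = b j + m * p j := by
      intro n h1 h2
      by_contra hc
      push_neg at hc
      have hmem : n ∈ S p b i' := by
        refine ⟨h1, fun j hj1 hj2 ⟨m, hm⟩ => ?_⟩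
        exact absurd hm (hc j (Finset.mem_Icc.mpr ⟨hj1, hj2⟩) m)
      have := (hbrec i' hi').2 hmem
      omega
    have hsub : Finset.Icc 1 X ⊆ (Finset.Icc 1 i').biUnion
        (fun j => (Finset.Icc 1 X).filter (fun n => ∃ m, n = b j + m * p j)) := by
      intro n hn
      rw [Finset.mem_Icc] at hn
      obtain ⟨j, hj, m, hm⟩ := hcov n hn.1 hn.2
      exact Finset.mem_biUnion.mpr ⟨j, hj, Finset.mem_filter.mpr ⟨Finset.mem_Icc.mpr hn, m, hm⟩⟩
    have hcard1 : X ≤ ∑ j ∈ Finset.Icc 1 i',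
        ((Finset.Icc 1 X).filter (fun n => ∃ m, n = b j + m * p j)).card := by
      calc X = (Finset.Icc 1 X).card := by rw [Nat.card_Icc]; omega
      _ ≤ _ := (Finset.card_le_card hsub).trans Finset.card_biUnion_le
    have hcard2 : ∀ j, 1 ≤ j → j ≤ i' →
        ((Finset.Icc 1 X).filter (fun n => ∃ m, n = b j + m * p j)).card
          ≤ (X / 3) / 2 ^ (j - 1) + 1 := by
      intro j hj1 hj2
      have hpj : 0 < p j := by have := ppos hp1 hpmono j hj1; omega
      have hsub2 : ((Finset.Icc 1 X).filter (fun n => ∃ m, n = b j + m * p j)) ⊆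
          (Finset.range (X / p j + 1)).image (fun m => b j + m * p j) := by
        intro n hn
        rw [Finset.mem_filter, Finset.mem_Icc] at hn
        obtain ⟨⟨h1, h2⟩, m, hm⟩ := hn
        refine Finset.mem_image.mpr ⟨m, Finset.mem_range.mpr ?_, hm.symm⟩
        have : m * p j ≤ X := by omega
        have := (Nat.le_div_iff_mul_le hpj).mpr this
        omega
      calc ((Finset.Icc 1 X).filter (fun n => ∃ m, n = b j + m * p j)).card
          ≤ _ := Finset.card_le_card hsub2
        _ ≤ (Finset.range (X / p j + 1)).card := Finset.card_image_le
        _ = X / p j + 1 := Finset.card_range _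
        _ ≤ (X / 3) / 2 ^ (j - 1) + 1 := by
            have hge := pgrow hp1 hpmono hpdvd j hj1
            have h1 : X / p j ≤ X / (3 * 2 ^ (j - 1)) :=
              Nat.div_le_div_left hge (by positivity)
            have h2 : X / (3 * 2 ^ (j - 1)) = (X / 3) / 2 ^ (j - 1) := by
              rw [Nat.div_div_eq_div_mul]
            omega
    have hsum : ∑ j ∈ Finset.Icc 1 i',
        ((Finset.Icc 1 X).filter (fun n => ∃ m, n = b j + m * p j)).card
          ≤ (∑ j ∈ Finset.Icc 1 i', ((X / 3) / 2 ^ (j - 1) + 1)) := by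
      apply Finset.sum_le_sum
      intro j hj
      rw [Finset.mem_Icc] at hj
      exact hcard2 j hj.1 hj.2
    have hsum2 : (∑ j ∈ Finset.Icc 1 i', ((X / 3) / 2 ^ (j - 1) + 1))
        = (∑ j ∈ Finset.Icc 1 i', (X / 3) / 2 ^ (j - 1)) + i' := by
      rw [Finset.sum_add_distrib]
      simp [Nat.card_Icc]
    have hre : (∑ j ∈ Finset.Icc 1 i', (X / 3) / 2 ^ (j - 1))
        = ∑ t ∈ Finset.range i', (X / 3) / 2 ^ t := by
      rw [show Finset.Icc 1 i' = Finset.Ico 1 (i' + 1) by rw [Finset.Ico_add_one_right_eq_Icc]]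
      rw [Finset.sum_Ico_eq_sum_range]
      simp
    have hgeo := geo_sum i' (X / 3)
    have hX3 : X / 3 = i' + 1 := by omega
    omega


lemma one_pL : ∀ L, 1 ≤ L → One b (p L) := by
  intro L hL
  have hpL : 1 ≤ p L := by have := ppos hp1 hpmono L hL; omega
  rw [one_iff hb1 hbrec hp1 hpmono hpdvd (p L) hpL]
  intro j m hj hm heq
  rcases le_or_gt j L with h | h
  · have hdvd : p j ∣ p L := pdvd' hpdvd j L hj h
    have hdvd2 : p j ∣ b j := by
      have : b j = p L - m * p j := by omega
      rw [this]
      exact Nat.dvd_sub hdvd (Dvd.intro_left m rfl)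
    have hbj : 1 ≤ b j := bpos hb1 hbrec j hj
    have := Nat.le_of_dvd (by omega) hdvd2
    have := blt_p hb1 hbrec hp1 hpmono hpdvd j hj
    omega
  · have h1 : p L < p j := lt_of_lt_of_le (hpmono L hL) (pmono hpmono (L+1) j (by omega) h)
    have h2 : 1 ≤ b j := bpos hb1 hbrec j hj
    have : 1 * p j ≤ m * p j := Nat.mul_le_mul_right _ hm
    omega

omit hp1 hpmono hpdvd in
lemma next_one : ∀ s y, 1 ≤ s → One b y → b s < y → b (s + 1) ≤ y := by
  rintro s y hs ⟨k, hk, rfl⟩ hlt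
  rcases le_or_gt k s with h | h
  · have := bmono_le hb1 hbrec k s hk h; omega
  · exact bmono_le hb1 hbrec (s+1) k (by omega) h

lemma copy : ∀ L u, 1 ≤ L → One b u → b L < u → u ≤ p L → One b (p L + u) := by
  intro L u hL hu hbu hup
  have hu1 : 1 ≤ u := le_trans (bpos hb1 hbrec L hL) (le_of_lt hbu)
  rw [one_iff hb1 hbrec hp1 hpmono hpdvd _ (by omega)]
  intro j m hj hm heq
  rcases le_or_gt j L with h | h
  · obtain ⟨c, hc⟩ := pdvd' hpdvd j L hj h
    rw [mul_comm] at hc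
    have hbj : b j ≤ b L := bmono_le hb1 hbrec j L hj h
    have hpj : 1 ≤ p j := by have := ppos hp1 hpmono j hj; omega
    -- m * p j > p L = c * p j, so m > c
    have hmc : c < m := by
      have h1 : m * p j > c * p j := by omega
      exact lt_of_mul_lt_mul_right (by omega) (Nat.zero_le (p j))
    have heq2 : u = b j + (m - c) * p j := by
      have : (m - c) * p j = m * p j - c * p j := Nat.sub_mul m c (p j)
      omega
    have hone := (one_iff hb1 hbrec hp1 hpmono hpdvd u hu1).mp hu
    exact hone j (m - c) hj (by omega) heq2
  · have hpj : p (L+1) ≤ p j := pmono hpmono (L+1) j (by omega) h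
    have hdb : 2 * p L ≤ p (L+1) := pdouble hpmono hpdvd L hL
    have h2 : 1 ≤ b j := bpos hb1 hbrec j hj
    have : 1 * p j ≤ m * p j := Nat.mul_le_mul_right _ hm
    omega

lemma copy_rev : ∀ L y, 1 ≤ L → One b y → p L < y → y ≤ 2 * p L →
    One b (y - p L) ∧ b (L + 1) ≤ y - p L := by
  intro L y hL hy hpy hy2
  set u := y - p L with hudef
  have hu1 : 1 ≤ u := by omega
  have hup : u ≤ p L := by omega
  have hyu : y = p L + u := by omega
  have honeu : One b u := by
    rw [one_iff hb1 hbrec hp1 hpmono hpdvd u hu1]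
    intro j m hj hm heq
    rcases le_or_gt j L with h | h
    · obtain ⟨c, hc⟩ := pdvd' hpdvd j L hj h
      rw [mul_comm] at hc
      have hc1 : 1 ≤ c := by
        have hpj : 1 ≤ p j := by have := ppos hp1 hpmono j hj; omega
        have := pmono hpmono j L hj h
        rcases Nat.eq_zero_or_pos c with rfl | h'
        · omega
        · exact h'
      have heqy : y = b j + (m + c) * p j := by
        rw [hyu, heq]
        have : (m + c) * p j = m * p j + c * p j := Nat.add_mul m c (p j)
        omega
      exact not_one_shift hb1 hbrec hp1 hpmono hpdvd j (m + c) hj (by omega)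
        (heqy ▸ hy)
    · have hpj : p (L+1) ≤ p j := pmono hpmono (L+1) j (by omega) h
      have hdb : 2 * p L ≤ p (L+1) := pdouble hpmono hpdvd L hL
      have h2 : 1 ≤ b j := bpos hb1 hbrec j hj
      have : 1 * p j ≤ m * p j := Nat.mul_le_mul_right _ hm
      omega
  refine ⟨honeu, ?_⟩
  obtain ⟨k, hk, hke⟩ := honeu
  rcases le_or_gt k L with h | h
  · exfalso
    obtain ⟨c, hc⟩ := pdvd' hpdvd k L hk h
    rw [mul_comm] at hc
    have hc1 : 1 ≤ c := by
      have hpk : 1 ≤ p k := by have := ppos hp1 hpmono k hk; omega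
      have := pmono hpmono k L hk h
      rcases Nat.eq_zero_or_pos c with rfl | h'
      · omega
      · exact h'
    have heqy : y = b k + c * p k := by omega
    exact not_one_shift hb1 hbrec hp1 hpmono hpdvd k c hk hc1 (heqy ▸ hy)
  · rw [← hke]
    exact bmono_le hb1 hbrec (L+1) k (by omega) h


omit hp1 hpmono hpdvd hb1 hbrec in
lemma two_mul_le_pow : ∀ L, 4 ≤ L → 2 * L ≤ 2 ^ (L - 1) := by
  intro L hL
  induction L, hL using Nat.le_induction with
  | base => norm_num
  | succ L hL IH =>
    have h2 : (2:ℕ) ≤ 2 ^ (L - 1) := by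
      calc (2:ℕ) = 2 ^ 1 := rfl
      _ ≤ 2 ^ (L - 1) := Nat.pow_le_pow_right (by norm_num) (by omega)
    have h3 : 2 ^ (L + 1 - 1) = 2 * 2 ^ (L - 1) := by
      have hL1 : L = L - 1 + 1 := by omega
      calc 2 ^ (L + 1 - 1) = 2 ^ L := by rw [Nat.add_sub_cancel]
      _ = 2 ^ (L - 1 + 1) := by rw [← hL1]
      _ = 2 ^ (L - 1) * 2 := pow_succ 2 (L - 1)
      _ = 2 * 2 ^ (L - 1) := by ring
    omega

lemma main_induction : ∀ j θ M, ∃ L, M ≤ L ∧ 1 ≤ L ∧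
    ∀ t, t < j → θ < b (L + t + 2) - b (L + t + 1) := by
  have eqb : ∀ x y : ℕ, x = y → b x = b y := fun x y h => by rw [h]
  intro j
  induction j with
  | zero =>
    intro θ M
    exact ⟨max M 1, le_max_left _ _, le_max_right _ _, fun t ht => by omega⟩
  | succ j IH =>
    intro θ M
    obtain ⟨L, hLR, hL1, hgap⟩ := IH θ (θ + M + j + 9)
    have hL4 : 4 ≤ L := by omega
    have h2L : 2 * L ≤ 2 ^ (L - 1) := two_mul_le_pow L hL4
    have hpgrow := pgrow hp1 hpmono hpdvd L (by omega)
    have hfit : ∀ t, t ≤ j + 1 → b (L + t) ≤ p L := by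
      intro t ht
      have h1 : b (L + t) ≤ 3 * (L + t) := b_le hb1 hbrec hp1 hpmono hpdvd (L+t) (by omega)
      have h2 : 3 * (L + t) ≤ 3 * (2 * L) := by omega
      have h3 : 3 * (2 * L) ≤ 3 * 2 ^ (L - 1) := by omega
      omega
    obtain ⟨i, hi1, hieq⟩ := one_pL hb1 hbrec hp1 hpmono hpdvd L (by omega)
    have hbi_le : b i ≤ 3 * i := b_le hb1 hbrec hp1 hpmono hpdvd i hi1
    have hige : 2 * L ≤ i := by
      have hx : 3 * (2 * L) ≤ 3 * 2 ^ (L - 1) := by omega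
      omega
    have hpL1 : 1 ≤ p L := by have := ppos hp1 hpmono L (by omega); omega
    have key : ∀ t, 1 ≤ t → t ≤ j + 1 → b (i + t) = p L + b (L + t) := by
      intro t ht1 ht2
      induction t, ht1 using Nat.le_induction with
      | base =>
        have hone : One b (p L + b (L + 1)) :=
          copy hb1 hbrec hp1 hpmono hpdvd L (b (L+1)) (by omega) ⟨L+1, by omega, rfl⟩
            (bmono_succ hb1 hbrec L (by omega)) (hfit 1 (by omega))
        have hble : 1 ≤ b (L+1) := bpos hb1 hbrec (L+1) (by omega)
        have hle : b (i + 1) ≤ p L + b (L + 1) :=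
          next_one hb1 hbrec i _ hi1 hone (by omega)
        have hgt : p L < b (i + 1) := by
          have := bmono_succ hb1 hbrec i hi1; omega
        have h2 : b (i+1) ≤ 2 * p L := by
          have := hfit 1 (by omega); omega
        obtain ⟨hone2, hge⟩ := copy_rev hb1 hbrec hp1 hpmono hpdvd L (b (i+1))
          (by omega) ⟨i+1, by omega, rfl⟩ hgt h2
        omega
      | succ t ht IHt =>
        have hIH : b (i + t) = p L + b (L + t) := IHt (by omega)
        have honeu : One b (p L + b (L + t + 1)) :=
          copy hb1 hbrec hp1 hpmono hpdvd L (b (L + t + 1)) (by omega)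
            ⟨L+t+1, by omega, rfl⟩
            (bmono' hb1 hbrec L (L+t+1) (by omega) (by omega))
            (by have := hfit (t+1) (by omega); have e := eqb (L + (t+1)) (L + t + 1) (by omega); omega)
        have hmm := bmono_succ hb1 hbrec (L + t) (by omega)
        have hlt : b (i + t) < p L + b (L + t + 1) := by omega
        have hle : b (i + t + 1) ≤ p L + b (L + t + 1) :=
          next_one hb1 hbrec (i + t) _ (by omega) honeu hlt
        have hgt : p L < b (i + t + 1) := by
          have h1 := bmono_succ hb1 hbrec (i + t) (by omega)
          have h2 : 1 ≤ b (L + t) := bpos hb1 hbrec (L + t) (by omega)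
          omega
        have h2 : b (i + t + 1) ≤ 2 * p L := by
          have := hfit (t+1) (by omega)
          have e := eqb (L + (t+1)) (L + t + 1) (by omega)
          omega
        obtain ⟨hone2, hge⟩ := copy_rev hb1 hbrec hp1 hpmono hpdvd L (b (i + t + 1))
          (by omega) ⟨i + t + 1, by omega, rfl⟩ hgt h2
        have hsucc2 := bmono_succ hb1 hbrec (i + t) (by omega)
        have hgt2 : b (L + t) < b (i + t + 1) - p L := by omega
        have hnext : b (L + t + 1) ≤ b (i + t + 1) - p L :=
          next_one hb1 hbrec (L + t) _ (by omega) hone2 hgt2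
        have e1 := eqb (i + (t + 1)) (i + t + 1) (by omega)
        have e2 := eqb (L + (t + 1)) (L + t + 1) (by omega)
        omega
    refine ⟨i - 1, by omega, by omega, ?_⟩
    intro t ht
    have ea := eqb (i - 1 + t + 2) (i + (t + 1)) (by omega)
    have eb := eqb (i - 1 + t + 1) (i + t) (by omega)
    have hk1 := key (t + 1) (by omega) (by omega)
    rcases Nat.eq_zero_or_pos t with rfl | ht1
    · have ec := eqb (i + 0) i (by omega)
      have ed := eqb (L + (0 + 1)) (L + 1) (by omega)
      have hbL1 : L + 1 ≤ b (L + 1) := bge hb1 hbrec (L+1) (by omega)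
      omega
    · obtain ⟨t', rfl⟩ : ∃ t', t = t' + 1 := ⟨t - 1, by omega⟩
      have hk2 := key (t' + 1) (by omega) (by omega)
      have hg := hgap t' (by omega)
      have ee := eqb (L + (t' + 1 + 1)) (L + t' + 2) (by omega)
      have ef := eqb (L + (t' + 1)) (L + t' + 1) (by omega)
      have hmm := bmono_succ hb1 hbrec (L + t' + 1) (by omega)
      omega

end
end SparseAux

/-- For every `m ≥ 1` the sequence `z` contains `m` single symbols `1`
separated by gaps of length `> m` filled with zeros; in particular `z` has arbitrarily long
blocks of consecutive zeros, and the upper Banach density of the set of zeros is `1`. -/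
theorem sparse_ones_and_upper_Banach_density_one
    (p : ℕ → ℕ)
    (hp1 : 3 ≤ p 1)
    (hpmono : ∀ k : ℕ, 1 ≤ k → p k < p (k + 1))
    (hpdvd : ∀ k : ℕ, 1 ≤ k → p k ∣ p (k + 1))
    (b : ℕ → ℕ) (hb1 : b 1 = 1)
    (hbrec : ∀ k : ℕ, 1 ≤ k → IsLeast
      {n : ℕ | 1 ≤ n ∧ ∀ j : ℕ, 1 ≤ j → j ≤ k → ¬∃ m : ℕ, n = b j + m * p j} (b (k + 1)))
    (z : ℕ → ℕ)
    (hz : ∀ n : ℕ, (z n = 1 ↔ ∃ k : ℕ, 1 ≤ k ∧ b k = n) ∧ (z n = 1 ∨ z n = 0)) :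
    (∀ m : ℕ, ∀ hm : 1 ≤ m, ∃ n : Fin m → ℕ,
      StrictMono n ∧
      (∀ i : Fin m, 1 ≤ n i ∧ z (n i) = 1) ∧
      (∀ j : ℕ, n ⟨0, hm⟩ ≤ j → j ≤ n ⟨m - 1, Nat.sub_lt hm Nat.one_pos⟩ →
        (∀ i : Fin m, j ≠ n i) → z j = 0) ∧
      (∀ i : Fin m, ∀ h : (i : ℕ) + 1 < m,
        m < n ⟨(i : ℕ) + 1, h⟩ - n i)) ∧
    (∀ m : ℕ, ∃ t : ℕ, ∀ j : ℕ, t < j → j ≤ t + m → z j = 0) ∧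
    Tendsto (fun L : ℕ =>
        ⨆ t : ℕ, (((Finset.Ioc t (t + L)).filter (fun n => z n = 0)).card : ℝ) / L)
      atTop (𝓝 1) := by
  classical
  have hOne1 : ∀ n, SparseAux.One b n → z n = 1 := fun n h => (hz n).1.mpr h
  have hzero : ∀ n, ¬ SparseAux.One b n → z n = 0 := by
    intro n hn
    rcases (hz n).2 with h | h
    · exact absurd ((hz n).1.mp h) hn
    · exact h
  have part1 : ∀ m : ℕ, ∀ hm : 1 ≤ m, ∃ n : Fin m → ℕ,
      StrictMono n ∧
      (∀ i : Fin m, 1 ≤ n i ∧ z (n i) = 1) ∧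
      (∀ j : ℕ, n ⟨0, hm⟩ ≤ j → j ≤ n ⟨m - 1, Nat.sub_lt hm Nat.one_pos⟩ →
        (∀ i : Fin m, j ≠ n i) → z j = 0) ∧
      (∀ i : Fin m, ∀ h : (i : ℕ) + 1 < m,
        m < n ⟨(i : ℕ) + 1, h⟩ - n i) := by
    intro m hm
    obtain ⟨L, hLM, hL1, hgap⟩ :=
      SparseAux.main_induction hb1 hbrec hp1 hpmono hpdvd (m - 1) m 1
    refine ⟨fun t : Fin m => b (L + 1 + (t : ℕ)), ?_, ?_, ?_, ?_⟩
    · intro a c hac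
      exact SparseAux.bmono' hb1 hbrec (L + 1 + (a : ℕ)) (L + 1 + (c : ℕ))
        (by omega) (by have := (Fin.lt_def.mp hac); omega)
    · intro t
      exact ⟨SparseAux.bpos hb1 hbrec _ (by omega),
        hOne1 _ ⟨L + 1 + (t : ℕ), by omega, rfl⟩⟩
    · intro x hx1 hx2 hxne
      apply hzero
      rintro ⟨k, hk, rfl⟩
      simp only [] at hx1 hx2
      have e1 : (L + 1 + ((⟨0, hm⟩ : Fin m) : ℕ)) = L + 1 := by simp
      have e2 : (L + 1 + ((⟨m - 1, Nat.sub_lt hm Nat.one_pos⟩ : Fin m) : ℕ)) = L + m := by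
        simp; omega
      rw [e1] at hx1
      rw [e2] at hx2
      have hlow : L + 1 ≤ k := by
        by_contra h
        have h1 : b k ≤ b L := SparseAux.bmono_le hb1 hbrec k L hk (by omega)
        have h2 : b L < b (L + 1) := SparseAux.bmono_succ hb1 hbrec L (by omega)
        omega
      have hhigh : k ≤ L + m := by
        by_contra h
        have h1 : b (L + m) < b k :=
          SparseAux.bmono' hb1 hbrec (L + m) k (by omega) (by omega)
        omega
      refine hxne ⟨k - (L + 1), by omega⟩ ?_
      show b k = b (L + 1 + ((⟨k - (L + 1), _⟩ : Fin m) : ℕ))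
      congr 1
      simp
      omega
    · intro i h
      have hg := hgap (i : ℕ) (by omega)
      show m < b (L + 1 + ((⟨(i : ℕ) + 1, h⟩ : Fin m) : ℕ)) - b (L + 1 + (i : ℕ))
      have e1 : b (L + 1 + ((⟨(i : ℕ) + 1, h⟩ : Fin m) : ℕ)) = b (L + (i : ℕ) + 2) := by
        congr 1; simp; omega
      have e2 : b (L + 1 + (i : ℕ)) = b (L + (i : ℕ) + 1) := by congr 1; omega
      omega
  have h12 : ∀ m : ℕ, 1 ≤ m + 2 := fun m => by omega
  have part2 : ∀ m : ℕ, ∃ t : ℕ, ∀ j : ℕ, t < j → j ≤ t + m → z j = 0 := by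
    intro m
    obtain ⟨n, hmono, hone, hbet, hgap⟩ := part1 (m + 2) (h12 m)
    refine ⟨n ⟨0, h12 m⟩, ?_⟩
    intro x hx1 hx2
    have h01 : ((⟨0, h12 m⟩ : Fin (m + 2)) : ℕ) + 1 < m + 2 := by simp
    have hg := hgap ⟨0, h12 m⟩ h01
    have hgv : m + 2 < n ⟨1, by omega⟩ - n ⟨0, h12 m⟩ := by
      have : (⟨((⟨0, h12 m⟩ : Fin (m + 2)) : ℕ) + 1, h01⟩ : Fin (m + 2)) = ⟨1, by omega⟩ := by
        apply Fin.ext; simp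
      rwa [this] at hg
    have hlast : n ⟨1, by omega⟩ ≤ n ⟨m + 2 - 1, Nat.sub_lt (h12 m) Nat.one_pos⟩ := by
      apply hmono.monotone
      rw [Fin.mk_le_mk]
      omega
    refine hbet x (by omega) (by omega) ?_
    intro i hxe
    rcases Nat.eq_zero_or_pos (i : ℕ) with hi0 | hi1
    · have : i = ⟨0, h12 m⟩ := Fin.ext (by simpa using hi0)
      rw [this] at hxe
      omega
    · have hle : n ⟨1, by omega⟩ ≤ n i := by
        apply hmono.monotone
        rw [Fin.le_def]
        exact hi1
      omega
  refine ⟨part1, part2, ?_⟩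
  have hev : (fun L : ℕ =>
      ⨆ t : ℕ, (((Finset.Ioc t (t + L)).filter (fun n => z n = 0)).card : ℝ) / L)
      =ᶠ[atTop] (fun _ => (1 : ℝ)) := by
    filter_upwards [eventually_ge_atTop 1] with L hL
    obtain ⟨t0, ht0⟩ := part2 L
    have hLpos : (0 : ℝ) < (L : ℝ) := by exact_mod_cast hL
    have hval : ∀ t : ℕ,
        (((Finset.Ioc t (t + L)).filter (fun n => z n = 0)).card : ℝ) / L ≤ 1 := by
      intro t
      have hc : ((Finset.Ioc t (t + L)).filter (fun n => z n = 0)).card ≤ L := by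
        calc ((Finset.Ioc t (t + L)).filter (fun n => z n = 0)).card
            ≤ (Finset.Ioc t (t + L)).card := Finset.card_filter_le _ _
          _ = L := by rw [Nat.card_Ioc]; omega
      rw [div_le_one hLpos]
      exact_mod_cast hc
    have ht0v : (((Finset.Ioc t0 (t0 + L)).filter (fun n => z n = 0)).card : ℝ) / L = 1 := by
      have hfull : (Finset.Ioc t0 (t0 + L)).filter (fun n => z n = 0)
          = Finset.Ioc t0 (t0 + L) := by
        apply Finset.filter_true_of_mem
        intro x hx
        rw [Finset.mem_Ioc] at hx
        exact ht0 x hx.1 hx.2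
      rw [hfull, Nat.card_Ioc]
      have : t0 + L - t0 = L := by omega
      rw [this]
      field_simp
    apply le_antisymm
    · exact ciSup_le hval
    · rw [← ht0v]
      refine le_ciSup (f := fun t : ℕ =>
        (((Finset.Ioc t (t + L)).filter (fun n => z n = 0)).card : ℝ) / L) ⟨1, ?_⟩ t0
      rintro y ⟨t, rfl⟩
      exact hval t
  exact Filter.Tendsto.congr' hev.symm tendsto_const_nhds
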